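/- arXiv:2505.15635 — 5 statements merged into one kernel-verified Lean document; each statement's English description precedes it below -/
import Mathlib

section
/- For real numbers g₁, g₂, θ, the 2×2 complex matrix M = exp(g₂·Y)·exp(i(θ/2)·Z)·exp(g₁·Y), where Y and Z are the Pauli matrices, has trace equal to 2·cosh(g₁+g₂)·cos(θ/2). -/
open Matrix NormedSpace Complex

noncomputable def PauliY : Matrix (Fin 2) (Fin 2) ℂ := !![0, -Complex.I; Complex.I, 0]
noncomputable def PauliZ : Matrix (Fin 2) (Fin 2) ℂ := !![1, 0; 0, -1]

lemma expY (g : ℂ) : exp (g • PauliY) =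
    !![Complex.cosh g, -Complex.I * Complex.sinh g;
       Complex.I * Complex.sinh g, Complex.cosh g] := by
  have hU : (!![1, 1; Complex.I, -Complex.I] : Matrix (Fin 2) (Fin 2) ℂ) *
      ((2 : ℂ)⁻¹ • !![1, -Complex.I; 1, Complex.I]) = 1 := by
    ext i j
    fin_cases i <;> fin_cases j <;>
      simp [Matrix.mul_apply, Fin.sum_univ_succ, Complex.ext_iff] <;> ring
  have hU' : ((2 : ℂ)⁻¹ • !![1, -Complex.I; 1, Complex.I]) *
      (!![1, 1; Complex.I, -Complex.I] : Matrix (Fin 2) (Fin 2) ℂ) = 1 := by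
    ext i j
    fin_cases i <;> fin_cases j <;>
      simp [Matrix.mul_apply, Fin.sum_univ_succ, Complex.ext_iff] <;> ring
  have hunit : IsUnit (!![1, 1; Complex.I, -Complex.I] : Matrix (Fin 2) (Fin 2) ℂ) :=
    ⟨⟨_, _, hU, hU'⟩, rfl⟩
  have hinv : (!![1, 1; Complex.I, -Complex.I] : Matrix (Fin 2) (Fin 2) ℂ)⁻¹ =
      (2 : ℂ)⁻¹ • !![1, -Complex.I; 1, Complex.I] :=
    inv_eq_right_inv hU
  have hdiag : (diagonal ![g, -g] : Matrix (Fin 2) (Fin 2) ℂ) = !![g, 0; 0, -g] := by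
    ext i j
    fin_cases i <;> fin_cases j <;> simp
  have hdecomp : g • PauliY =
      !![1, 1; Complex.I, -Complex.I] * diagonal ![g, -g] *
        (!![1, 1; Complex.I, -Complex.I] : Matrix (Fin 2) (Fin 2) ℂ)⁻¹ := by
    rw [hinv, hdiag]
    ext i j
    fin_cases i <;> fin_cases j <;>
      simp [PauliY, Matrix.mul_apply, Fin.sum_univ_succ, Complex.ext_iff] <;>
      first | exact ⟨trivial, trivial⟩ | refine ⟨by ring, by ring⟩ | (ring_nf; rw [Complex.I_sq]; ring) | ring
  rw [hdecomp, Matrix.exp_conj _ _ hunit, Matrix.exp_diagonal, hinv]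
  ext i j
  fin_cases i <;> fin_cases j <;>
    simp [Matrix.mul_apply, Fin.sum_univ_succ, Matrix.diagonal_apply, Complex.cosh,
      Complex.sinh, ← Complex.exp_eq_exp_ℂ, Pi.exp_def, Matrix.vecMul_diagonal, Matrix.mulVec_diagonal] <;>
    first | exact ⟨trivial, trivial⟩ | refine ⟨by ring, by ring⟩ | (ring_nf; rw [Complex.I_sq]; ring) | ring

lemma expZ (t : ℂ) : exp (t • PauliZ) =
    !![Complex.exp t, 0; 0, Complex.exp (-t)] := by
  have hdecomp : t • PauliZ = diagonal ![t, -t] := by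
    ext i j
    fin_cases i <;> fin_cases j <;> simp [PauliZ, diagonal]
  rw [hdecomp, Matrix.exp_diagonal]
  ext i j
  fin_cases i <;> fin_cases j <;>
    simp [Matrix.diagonal_apply, ← Complex.exp_eq_exp_ℂ, Pi.exp_def, Matrix.vecMul_diagonal, Matrix.mulVec_diagonal]

/-- The trace of exp(g₂·Y)·exp(i(θ/2)·Z)·exp(g₁·Y) equals 2·cosh(g₁+g₂)·cos(θ/2). -/
theorem trace_circuit (g₁ g₂ θ : ℝ) :
    (exp ((g₂ : ℂ) • PauliY) * exp ((Complex.I * (θ / 2 : ℝ)) • PauliZ) *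
      exp ((g₁ : ℂ) • PauliY)).trace =
      2 * Real.cosh (g₁ + g₂) * Real.cos (θ / 2) := by
  rw [expY, expY, expZ, Matrix.trace]
  have h1 : Complex.exp (Complex.I * (θ / 2 : ℝ)) =
      Real.cos (θ / 2) + Real.sin (θ / 2) * Complex.I := by
    rw [mul_comm, Complex.exp_mul_I]
    push_cast [Complex.ofReal_cos, Complex.ofReal_sin]
    rfl
  have h2 : Complex.exp (-(Complex.I * (θ / 2 : ℝ))) =
      Real.cos (θ / 2) - Real.sin (θ / 2) * Complex.I := by
    have := Complex.exp_mul_I (-(θ / 2 : ℝ) : ℂ)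
    rw [show -(Complex.I * (θ / 2 : ℝ)) = (-(θ / 2 : ℝ) : ℂ) * Complex.I by ring, this]
    push_cast [Complex.cos_neg, Complex.sin_neg, Complex.ofReal_cos, Complex.ofReal_sin]
    ring
  have hc1 : Complex.cosh (g₁ : ℂ) = (Real.cosh g₁ : ℂ) := (Complex.ofReal_cosh g₁).symm
  have hc2 : Complex.cosh (g₂ : ℂ) = (Real.cosh g₂ : ℂ) := (Complex.ofReal_cosh g₂).symm
  have hs1 : Complex.sinh (g₁ : ℂ) = (Real.sinh g₁ : ℂ) := (Complex.ofReal_sinh g₁).symm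
  have hs2 : Complex.sinh (g₂ : ℂ) = (Real.sinh g₂ : ℂ) := (Complex.ofReal_sinh g₂).symm
  simp only [Fin.sum_univ_succ, Fin.sum_univ_zero, Matrix.mul_apply, h1, h2, hc1, hc2, hs1, hs2]
  have hadd : (Real.cosh (g₁ + g₂) : ℂ) = Real.cosh g₁ * Real.cosh g₂ +
      Real.sinh g₁ * Real.sinh g₂ := by
    push_cast [Real.cosh_add]; ring
  simp only [diag_apply]
  push_cast [hadd]
  simp [Matrix.cons_val_zero, Matrix.cons_val_one, Fin.sum_univ_succ]
  ring_nf
  simp [Complex.I_sq]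
end

section
/- For real numbers g₁, g₂ and θ ∈ [π, 3π], the real part of the trace of exp(g₂·Y)·exp(i(θ/2)·Z)·exp(g₁·Y) is ≥ -2 if and only if cosh(g₁+g₂) ≤ 1/|cos(θ/2)| (where the inequality is vacuously true when cos(θ/2) = 0). -/
open Matrix NormedSpace Complex

noncomputable def Umat : (Matrix (Fin 2) (Fin 2) ℂ)ˣ :=
  ⟨!![1, 1; Complex.I, -Complex.I], !![1/2, -Complex.I/2; 1/2, Complex.I/2],
    by ext i j; fin_cases i <;> fin_cases j <;>
      simp [Matrix.mul_apply, Fin.sum_univ_succ, Matrix.one_apply] <;> ring_nf <;>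
      simp [Complex.ext_iff],
    by ext i j; fin_cases i <;> fin_cases j <;>
      simp [Matrix.mul_apply, Fin.sum_univ_succ, Matrix.one_apply] <;> ring_nf <;>
      simp [Complex.ext_iff] <;> norm_num⟩

lemma exp_gY (g : ℝ) : exp ((g : ℂ) • PauliY) =
    !![Complex.cosh g, -Complex.I * Complex.sinh g;
       Complex.I * Complex.sinh g, Complex.cosh g] := by
  have h1 : (g : ℂ) • PauliY =
      (Umat : Matrix (Fin 2) (Fin 2) ℂ) * (Matrix.diagonal ![(g:ℂ), -g]) *
        ((Umat⁻¹ : (Matrix (Fin 2) (Fin 2) ℂ)ˣ) : Matrix (Fin 2) (Fin 2) ℂ) := by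
    ext i j
    fin_cases i <;> fin_cases j <;>
      simp [Umat, Matrix.mul_apply, Fin.sum_univ_succ, PauliY, Matrix.vecMul,
        Matrix.diagonal_apply, dotProduct] <;> ring
  rw [h1, Matrix.exp_units_conj, Matrix.exp_diagonal]
  have hd : (NormedSpace.exp ![(g:ℂ), -g]) = ![Complex.exp g, Complex.exp (-g)] := by
    rw [Pi.exp_def]; funext k; fin_cases k <;> simp [Complex.exp_eq_exp_ℂ]
  rw [hd]
  ext i j
  fin_cases i <;> fin_cases j <;>
    simp [Umat, Matrix.mul_apply, Fin.sum_univ_succ, Matrix.vecMul, Matrix.diagonal_apply,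
      dotProduct, Complex.cosh, Complex.sinh] <;> ring_nf <;>
    simp [Complex.I_sq] <;> ring

lemma exp_Z (t : ℝ) : exp ((Complex.I * (t : ℝ)) • PauliZ) =
    !![Complex.exp (Complex.I * t), 0; 0, Complex.exp (-(Complex.I * t))] := by
  have h1 : (Complex.I * (t : ℝ)) • PauliZ =
      Matrix.diagonal ![Complex.I * t, -(Complex.I * t)] := by
    ext i j
    fin_cases i <;> fin_cases j <;> simp [PauliZ, Matrix.diagonal_apply]
  rw [h1, Matrix.exp_diagonal]
  have hd : (NormedSpace.exp ![Complex.I * t, -(Complex.I * t)]) =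
      ![Complex.exp (Complex.I * t), Complex.exp (-(Complex.I * t))] := by
    rw [Pi.exp_def]; funext k; fin_cases k <;> simp [Complex.exp_eq_exp_ℂ]
  rw [hd]
  ext i j
  fin_cases i <;> fin_cases j <;> simp [Matrix.diagonal_apply]

lemma trace_val (g₁ g₂ t : ℝ) :
    (!![Complex.cosh g₂, -Complex.I * Complex.sinh g₂;
        Complex.I * Complex.sinh g₂, Complex.cosh g₂] *
      !![Complex.exp (Complex.I * t), 0; 0, Complex.exp (-(Complex.I * t))] *
      !![Complex.cosh g₁, -Complex.I * Complex.sinh g₁;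
        Complex.I * Complex.sinh g₁, Complex.cosh g₁]).trace =
    2 * Complex.cos t * Complex.cosh (g₁ + g₂) := by
  rw [Matrix.mul_fin_two, Matrix.mul_fin_two, Matrix.trace_fin_two_of]
  push_cast
  simp only [Complex.cos, Complex.cosh, Complex.sinh, Complex.exp_add, neg_add, mul_comm]
  ring_nf
  simp [Complex.I_sq]
  ring

/-- For θ ∈ [π, 3π], the real part of the trace of exp(g₂·Y)·exp(i(θ/2)·Z)·exp(g₁·Y)
is ≥ -2 if and only if cosh(g₁+g₂) ≤ 1/|cos(θ/2)| (vacuously true when cos(θ/2) = 0). -/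
theorem trace_condition (g₁ g₂ θ : ℝ) (hθ : θ ∈ Set.Icc Real.pi (3 * Real.pi)) :
    (-2 ≤ ((exp ((g₂ : ℂ) • PauliY) * exp ((Complex.I * (θ / 2 : ℝ)) • PauliZ) *
        exp ((g₁ : ℂ) • PauliY)).trace).re) ↔
      (Real.cos (θ / 2) = 0 ∨
        Real.cosh (g₁ + g₂) ≤ 1 / |Real.cos (θ / 2)|) := by
  rw [exp_gY, exp_gY, exp_Z, trace_val]
  have hre : (2 * Complex.cos (θ / 2 : ℝ) * Complex.cosh ((g₁ : ℂ) + g₂)) =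
      ((2 * Real.cos (θ / 2) * Real.cosh (g₁ + g₂) : ℝ) : ℂ) := by
    push_cast [Complex.ofReal_cos, Complex.ofReal_cosh]
    ring
  rw [hre, Complex.ofReal_re]
  set c := Real.cos (θ / 2) with hc
  set h := Real.cosh (g₁ + g₂) with hh
  have hcle : c ≤ 0 := by
    apply Real.cos_nonpos_of_pi_div_two_le_of_le
    · linarith [hθ.1]
    · linarith [hθ.2]
  have hone : 1 ≤ h := Real.one_le_cosh _
  rcases (eq_or_lt_of_le hcle) with hc0 | hcneg
  · constructor
    · intro _; left; exact hc0
    · intro _; rw [hc0]; norm_num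
  · rw [or_iff_right (ne_of_lt hcneg), abs_of_neg hcneg,
      le_div_iff₀ (by linarith : (0:ℝ) < -c)]
    constructor
    · intro hle; nlinarith
    · intro hle; nlinarith
end

section
/- Every matrix of the form exp(-iH) with H = s₁·(-i/2)X + s₂·(-i/2)Y + s₃·(1/2)Z for real s₁, s₂, s₃ (where X, Y, Z are Pauli matrices) has real trace greater than or equal to -2. -/
open Matrix NormedSpace Complex Nat

noncomputable def PauliX : Matrix (Fin 2) (Fin 2) ℂ := !![0, 1; 1, 0]
set_option maxHeartbeats 1000000 in
lemma trace_hasSum_exp_aux (A : Matrix (Fin 2) (Fin 2) ℂ) :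
    HasSum (fun n : ℕ => ((n ! : ℂ))⁻¹ * (A ^ n).trace) ((exp A).trace) := by
  letI : NormedRing (Matrix (Fin 2) (Fin 2) ℂ) := Matrix.linftyOpNormedRing
  letI : NormedAlgebra ℂ (Matrix (Fin 2) (Fin 2) ℂ) := Matrix.linftyOpNormedAlgebra
  have h1 : HasSum (fun n : ℕ => (n ! : ℂ)⁻¹ • A ^ n) (exp A) := by
    exact NormedSpace.exp_series_hasSum_exp' (𝕂 := ℂ) A
  have hT := h1.mapL (LinearMap.toContinuousLinearMap (Matrix.traceLinearMap (Fin 2) ℂ ℂ))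
  simpa [Matrix.trace_smul, smul_eq_mul] using hT

set_option maxHeartbeats 1000000 in
/-- Every matrix exp(-iH), with H = s₁·(-i/2)X + s₂·(-i/2)Y + s₃·(1/2)Z for real s₁ s₂ s₃,
has real trace ≥ -2. -/
theorem trace_exp_sp2_ge_neg_two (s₁ s₂ s₃ : ℝ) :
    -2 ≤ ((exp ((-Complex.I) •
        ((s₁ : ℂ) • ((-Complex.I / 2) • PauliX) + (s₂ : ℂ) • ((-Complex.I / 2) • PauliY) +
          (s₃ : ℂ) • ((1 / 2 : ℂ) • PauliZ)))).trace).re := by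
  set A : Matrix (Fin 2) (Fin 2) ℂ := (-Complex.I) •
        ((s₁ : ℂ) • ((-Complex.I / 2) • PauliX) + (s₂ : ℂ) • ((-Complex.I / 2) • PauliY) +
          (s₃ : ℂ) • ((1 / 2 : ℂ) • PauliZ)) with hAdef
  set c : ℝ := (s₁^2 + s₂^2 - s₃^2)/4 with hc
  have hI3 : (Complex.I)^3 = -Complex.I := by
    rw [pow_succ, Complex.I_sq]; ring
  have hA : A = !![-Complex.I * s₃/2, (-s₁ + Complex.I*s₂)/2;
      (-(s₁:ℂ) - Complex.I*s₂)/2, Complex.I*s₃/2] := by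
    ext i j
    fin_cases i <;> fin_cases j <;>
        simp [hAdef, PauliX, PauliY, PauliZ] <;> try ring_nf <;>
      try simp [Complex.I_sq, hI3] <;> try ring_nf
  have hsq : A * A = (c:ℂ) • 1 := by
    rw [hA]
    ext i j
    fin_cases i <;> fin_cases j <;>
        simp [Matrix.mul_apply, Fin.sum_univ_two, Matrix.one_apply, hc] <;> try push_cast <;>
      try ring_nf <;> try simp [Complex.I_sq, hI3] <;> try ring_nf
  have htrA : A.trace = 0 := by
    rw [hA]; simp [Matrix.trace_fin_two]; ring
  have hpow_even : ∀ k : ℕ, A ^ (2*k) = ((c:ℂ)^k) • (1 : Matrix (Fin 2) (Fin 2) ℂ) := by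
    intro k
    induction k with
    | zero => simp
    | succ k ih =>
      have h2 : 2*(k+1) = 2*k + 2 := by ring
      rw [h2, pow_add, ih, pow_two, hsq]
      rw [smul_mul_assoc, Matrix.one_mul, smul_smul, ← pow_succ]
  obtain ⟨z, hz, hre⟩ : ∃ z : ℂ, z^2 = -(c:ℂ) ∧ -1 ≤ (Complex.cos z).re := by
    rcases le_or_gt 0 c with h | h
    · refine ⟨Real.sqrt c * Complex.I, ?_, ?_⟩
      · rw [mul_pow, Complex.I_sq, ← Complex.ofReal_pow, Real.sq_sqrt h]
        ring
      · rw [Complex.cos_mul_I, ← Complex.ofReal_cosh]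
        simp only [Complex.ofReal_re]
        linarith [Real.one_le_cosh (Real.sqrt c)]
    · refine ⟨(Real.sqrt (-c) : ℂ), ?_, ?_⟩
      · rw [← Complex.ofReal_pow, Real.sq_sqrt (by linarith)]
        push_cast; ring
      · rw [← Complex.ofReal_cos]
        simp only [Complex.ofReal_re]
        exact Real.neg_one_le_cos _
  have hcos : HasSum (fun n : ℕ => ((n ! : ℂ))⁻¹ * (A ^ n).trace) (2 * Complex.cos z) := by
    have heven : HasSum (fun k : ℕ => (((2*k)! : ℂ))⁻¹ * (A ^ (2*k)).trace)
        (2 * Complex.cos z) := by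
      have h := (Complex.hasSum_cos z).mul_left 2
      convert h using 2 with k
      · rfl
      rw [hpow_even k]
      have hz2 : z^(2*k) = (-(c:ℂ))^k := by rw [pow_mul, hz]
      rw [hz2]
      simp only [Matrix.trace_smul, Matrix.trace_one, Fintype.card_fin, smul_eq_mul]
      have : ((-1 : ℂ))^k * (-(c:ℂ))^k = (c:ℂ)^k := by
        rw [← mul_pow]; ring_nf
      field_simp
      rw [mul_comm ((2:ℂ)) _, mul_assoc, ← this]
      ring
    have hodd : HasSum (fun k : ℕ => (((2*k+1)! : ℂ))⁻¹ * (A ^ (2*k+1)).trace) 0 := by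
      have : (fun k : ℕ => (((2*k+1)! : ℂ))⁻¹ * (A ^ (2*k+1)).trace) = fun _ => 0 := by
        funext k
        rw [pow_succ, hpow_even k, smul_mul_assoc, Matrix.one_mul, Matrix.trace_smul, htrA]
        simp
      rw [this]
      exact hasSum_zero
    have hsum := HasSum.even_add_odd
      (f := fun n : ℕ => ((n ! : ℂ))⁻¹ * (A ^ n).trace) heven hodd
    simpa using hsum
  have hexp : HasSum (fun n : ℕ => ((n ! : ℂ))⁻¹ * (A ^ n).trace) ((exp A).trace) :=
    trace_hasSum_exp_aux A
  have heq : (exp A).trace = 2 * Complex.cos z := hexp.unique hcos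
  rw [heq]
  have h2 : (2 * Complex.cos z).re = 2 * (Complex.cos z).re := by simp
  rw [h2]; linarith
end

section
/- Define QFI(φ) = (1/4)·sinh²(4g·sin²(φ/2)) + 4g²·cos²(φ/2) for g > 0. Then for all φ ∈ [0, 2π], QFI(φ) ≤ QFI(π), i.e., the global maximum over [0,2π] is attained at φ = π. -/
/-- The QFI(φ) = (1/4)sinh²(4g sin²(φ/2)) + 4g²cos²(φ/2) attains its global maximum
over [0,2π] at φ = π. -/
theorem qfi_max_at_pi (g : ℝ) (hg : 0 < g) (φ : ℝ) (hφ : φ ∈ Set.Icc 0 (2 * Real.pi)) :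
    (1 / 4) * Real.sinh (4 * g * Real.sin (φ / 2) ^ 2) ^ 2 + 4 * g ^ 2 * Real.cos (φ / 2) ^ 2 ≤
      (1 / 4) * Real.sinh (4 * g * Real.sin (Real.pi / 2) ^ 2) ^ 2 +
        4 * g ^ 2 * Real.cos (Real.pi / 2) ^ 2 := by
  rw [Real.sin_pi_div_two, Real.cos_pi_div_two]
  norm_num
  set t : ℝ := Real.sin (φ / 2) ^ 2 with ht
  have ht0 : 0 ≤ t := sq_nonneg _
  have ht1 : t ≤ 1 := Real.sin_sq_le_one _
  have hcos : Real.cos (φ / 2) ^ 2 = 1 - t := by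
    rw [ht, ← Real.sin_sq_add_cos_sq (φ / 2)]; ring
  rw [hcos]
  have key : Real.sinh (4 * g) ^ 2 - Real.sinh (4 * g * t) ^ 2 =
      Real.sinh (4 * g + 4 * g * t) * Real.sinh (4 * g - 4 * g * t) := by
    rw [Real.sinh_add, Real.sinh_sub]
    have h1 := Real.cosh_sq (4 * g)
    have h2 := Real.cosh_sq (4 * g * t)
    nlinarith [h1, h2]
  have hA : (4 * g + 4 * g * t) ≤ Real.sinh (4 * g + 4 * g * t) :=
    Real.self_le_sinh_iff.2 (by nlinarith)
  have hB : (4 * g - 4 * g * t) ≤ Real.sinh (4 * g - 4 * g * t) :=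
    Real.self_le_sinh_iff.2 (by nlinarith)
  have hApos : (0:ℝ) ≤ 4 * g + 4 * g * t := by nlinarith
  have hBpos : (0:ℝ) ≤ 4 * g - 4 * g * t := by nlinarith
  nlinarith [mul_le_mul hA hB hBpos (le_trans hApos hA),
    mul_nonneg (mul_nonneg (sq_nonneg g) ht0) (sub_nonneg.2 ht1)]
end

section
/- The 4×4 real matrix T(λ,θ,ξ) with entries given in Domain 1 by T = [[cos x, -θs/x, λ sin ξ s/x, -λ cos ξ s/x],[θs/x, cos x, -λ cos ξ s/x, -λ sin ξ s/x],[λ sin ξ s/x, -λ cos ξ s/x, cos x, -θs/x],[-λ cos ξ s/x, -λ sin ξ s/x, θs/x, cos x]], where s = sin x and x = √(θ²-λ²) with θ² > λ², is symplectic: Tᵀ·Δ·T = Δ for Δ = diag-block(J, J), J = [[0,1],[-1,0]]. -/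
open Matrix

/-- The standard symplectic form on ℝ⁴: block diagonal with blocks [[0,1],[-1,0]]. -/
def SympForm : Matrix (Fin 4) (Fin 4) ℝ :=
  !![0, 1, 0, 0; -1, 0, 0, 0; 0, 0, 0, 1; 0, 0, -1, 0]

/-- The Domain 1 matrix T (with s = sin x, x = √(θ²-λ²), θ² > λ² > 0). -/
noncomputable def TDomain1 (lam θ ξ : ℝ) : Matrix (Fin 4) (Fin 4) ℝ :=
  let x := Real.sqrt (θ ^ 2 - lam ^ 2)
  let s := Real.sin x
  !![Real.cos x, -θ * s / x, lam * Real.sin ξ * s / x, -lam * Real.cos ξ * s / x;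
     θ * s / x, Real.cos x, -lam * Real.cos ξ * s / x, -lam * Real.sin ξ * s / x;
     lam * Real.sin ξ * s / x, -lam * Real.cos ξ * s / x, Real.cos x, -θ * s / x;
     -lam * Real.cos ξ * s / x, -lam * Real.sin ξ * s / x, θ * s / x, Real.cos x]

lemma aux_sympl (a b c d : ℝ) (h : c ^ 2 + a ^ 2 - b ^ 2 - d ^ 2 = 1) :
    (!![c, -a, b, -d; a, c, -d, -b; b, -d, c, -a; -d, -b, a, c])ᵀ * SympForm *
      !![c, -a, b, -d; a, c, -d, -b; b, -d, c, -a; -d, -b, a, c] = SympForm := by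
  unfold SympForm
  ext i j
  fin_cases i <;> fin_cases j <;>
    simp [Matrix.mul_apply, Fin.sum_univ_four, Matrix.vecHead, Matrix.vecTail] <;>
    nlinarith [h]

/-- The Domain 1 matrix T is symplectic: Tᵀ·Δ·T = Δ. -/
theorem TDomain1_symplectic (lam θ ξ : ℝ) (h1 : lam ^ 2 < θ ^ 2) (h2 : 0 < lam ^ 2) :
    (TDomain1 lam θ ξ)ᵀ * SympForm * TDomain1 lam θ ξ = SympForm := by
  have hpos : (0:ℝ) < θ ^ 2 - lam ^ 2 := by linarith
  set x := Real.sqrt (θ ^ 2 - lam ^ 2) with hxdef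
  have hx2 : x ^ 2 = θ ^ 2 - lam ^ 2 := Real.sq_sqrt hpos.le
  have hx : x ≠ 0 := by positivity
  have hsc := Real.sin_sq_add_cos_sq x
  have hsc2 := Real.sin_sq_add_cos_sq ξ
  have hT : TDomain1 lam θ ξ =
      !![Real.cos x, -(θ * Real.sin x / x), lam * Real.sin ξ * Real.sin x / x,
           -(lam * Real.cos ξ * Real.sin x / x);
         θ * Real.sin x / x, Real.cos x, -(lam * Real.cos ξ * Real.sin x / x),
           -(lam * Real.sin ξ * Real.sin x / x);
         lam * Real.sin ξ * Real.sin x / x, -(lam * Real.cos ξ * Real.sin x / x), Real.cos x,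
           -(θ * Real.sin x / x);
         -(lam * Real.cos ξ * Real.sin x / x), -(lam * Real.sin ξ * Real.sin x / x),
           θ * Real.sin x / x, Real.cos x] := by
    unfold TDomain1
    rw [← hxdef]
    ext i j
    fin_cases i <;> fin_cases j <;> simp <;> ring
  rw [hT]
  apply aux_sympl
  have key : (θ * Real.sin x / x) ^ 2 - (lam * Real.sin ξ * Real.sin x / x) ^ 2 -
      (lam * Real.cos ξ * Real.sin x / x) ^ 2 = Real.sin x ^ 2 := by
    field_simp
    linear_combination (-Real.sin x ^ 2) * hx2 + (-(lam ^ 2 * Real.sin x ^ 2)) * hsc2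
  nlinarith [key, hsc]
end
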